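/- Let U be a finite nonempty ground set of size n, and let S_1, ..., S_ℓ be the (disjoint, nonempty) sets of newly covered elements in the successive iterations of the greedy algorithm for set cover; that is, S_1, ..., S_ℓ partition U. Let S ⊆ U be any set such that for each i, |S_i| ≥ |S| - Σ_{j<i} |S ∩ S_j| (the greedy property with respect to S). Define ỹ_v := -(1/n) · log(|S_i|·e/n) for v ∈ S_i. Then Σ_{v ∈ S} ỹ_v ≤ -(|S|/n) · log(|S|/n). -/

import Mathlib

open scoped BigOperators

lemma aux_analytic (r b : ℝ) (hb : 0 ≤ b) (hbr : b ≤ r) :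
    r * Real.log r - b * Real.log b ≤ (r - b) * (Real.log r + 1) := by
  rcases eq_or_lt_of_le hb with h0 | h0
  · have hr : 0 ≤ r := le_trans hb hbr
    rw [← h0]
    simp only [Real.log_zero, zero_mul, sub_zero]
    nlinarith
  · have hr : 0 < r := lt_of_lt_of_le h0 hbr
    have hlog : Real.log (r / b) ≤ r / b - 1 :=
      Real.log_le_sub_one_of_pos (by positivity)
    have hdiv : Real.log (r / b) = Real.log r - Real.log b :=
      Real.log_div hr.ne' h0.ne'
    have h1 : b * (Real.log r - Real.log b) ≤ r - b := by
      rw [← hdiv]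
      calc b * Real.log (r / b) ≤ b * (r / b - 1) := by nlinarith
        _ = r - b := by field_simp
    nlinarith

lemma aux_telescope (A : ℕ → ℕ) (l : ℕ) : ∀ m k, k + m = l →
    ((∑ j ∈ Finset.Ico k l, A j : ℕ) : ℝ) *
        Real.log ((∑ j ∈ Finset.Ico k l, A j : ℕ) : ℝ) ≤
      ∑ j ∈ Finset.Ico k l, (A j : ℝ) *
        (Real.log ((∑ i ∈ Finset.Ico j l, A i : ℕ) : ℝ) + 1) := by
  intro m
  induction m with
  | zero =>
    intro k hk
    have : k = l := by omega
    subst this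
    simp [Finset.Ico_self]
  | succ m ih =>
    intro k hk
    have hkl : k < l := by omega
    have hsplit : ∑ j ∈ Finset.Ico k l, A j
        = A k + ∑ j ∈ Finset.Ico (k + 1) l, A j :=
      Finset.sum_eq_sum_Ico_succ_bot hkl A
    have hsplit2 : ∑ j ∈ Finset.Ico k l,
          (A j : ℝ) * (Real.log ((∑ i ∈ Finset.Ico j l, A i : ℕ) : ℝ) + 1)
        = (A k : ℝ) * (Real.log ((∑ i ∈ Finset.Ico k l, A i : ℕ) : ℝ) + 1) +
          ∑ j ∈ Finset.Ico (k + 1) l,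
            (A j : ℝ) * (Real.log ((∑ i ∈ Finset.Ico j l, A i : ℕ) : ℝ) + 1) :=
      Finset.sum_eq_sum_Ico_succ_bot hkl _
    have ih' := ih (k + 1) (by omega)
    have key := aux_analytic ((∑ j ∈ Finset.Ico k l, A j : ℕ) : ℝ)
      ((∑ j ∈ Finset.Ico (k + 1) l, A j : ℕ) : ℝ)
      (by positivity) (by
        have hble : ∑ j ∈ Finset.Ico (k + 1) l, A j ≤ ∑ j ∈ Finset.Ico k l, A j := by
          rw [hsplit]; exact Nat.le_add_left _ _
        exact_mod_cast hble)
    have hcast : ((∑ j ∈ Finset.Ico k l, A j : ℕ) : ℝ)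
        - ((∑ j ∈ Finset.Ico (k + 1) l, A j : ℕ) : ℝ) = (A k : ℝ) := by
      rw [hsplit]; push_cast; ring
    rw [hsplit2]
    rw [hcast] at key
    linarith

/-- Dual feasibility step in the dual-fitting analysis of greedy for minimum
entropy set cover: the dual vector `ỹ` satisfies the constraint of every
covered set `T`. -/
theorem stmt_4 {V : Type*} [Fintype V] [DecidableEq V]
    (n : ℕ) (hn : n = Fintype.card V) (hn0 : 0 < n)
    (l : ℕ) (S : Fin l → Finset V)
    (hdisj : ∀ i j, i ≠ j → Disjoint (S i) (S j))
    (hne : ∀ i, (S i).Nonempty)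
    (hpart : ∀ v : V, ∃ i, v ∈ S i)
    (T : Finset V)
    (hgreedy : ∀ i : Fin l,
      (T.card : ℤ) - ∑ j ∈ Finset.Iio i, ((T ∩ S j).card : ℤ) ≤ ((S i).card : ℤ))
    (y : V → ℝ)
    (hy : ∀ i : Fin l, ∀ v ∈ S i,
      y v = -(1 / n : ℝ) * Real.logb 2 (((S i).card : ℝ) * Real.exp 1 / n)) :
    ∑ v ∈ T, y v ≤ -((T.card : ℝ) / n) * Real.logb 2 ((T.card : ℝ) / n) := by
  classical
  by_cases hT0 : T = ∅
  · simp [hT0]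
  have hTne : T.Nonempty := Finset.nonempty_iff_ne_empty.mpr hT0
  have ht1 : 1 ≤ T.card := Finset.card_pos.mpr hTne
  set A : ℕ → ℕ := fun k => if h : k < l then (T ∩ S ⟨k, h⟩).card else 0 with hA
  set B : ℕ → ℕ := fun k => if h : k < l then (S ⟨k, h⟩).card else 1 with hB
  set g : ℕ → ℕ := fun k => ∑ j ∈ Finset.Ico k l, A j with hg
  have hn' : (0 : ℝ) < n := by exact_mod_cast hn0
  have hlog2 : (0 : ℝ) < Real.log 2 := Real.log_pos one_lt_two
  have hT : T = Finset.univ.biUnion (fun i : Fin l => T ∩ S i) := by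
    ext v
    simp only [Finset.mem_biUnion, Finset.mem_univ, Finset.mem_inter, true_and]
    constructor
    · intro hv; obtain ⟨i, hi⟩ := hpart v; exact ⟨i, hv, hi⟩
    · rintro ⟨i, hv, _⟩; exact hv
  have hTdisj : ∀ i ∈ (Finset.univ : Finset (Fin l)), ∀ j ∈ Finset.univ, i ≠ j →
      Disjoint (T ∩ S i) (T ∩ S j) := fun i _ j _ hij =>
    (hdisj i j hij).mono Finset.inter_subset_right Finset.inter_subset_right
  have ht_eq : T.card = ∑ i : Fin l, (T ∩ S i).card := by
    conv_lhs => rw [hT]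
    exact Finset.card_biUnion hTdisj
  have hAval : ∀ i : Fin l, A i.val = (T ∩ S i).card := by
    intro i
    simp only [hA, i.isLt, dif_pos, Fin.eta]
  have hBval : ∀ i : Fin l, B i.val = (S i).card := by
    intro i
    simp only [hB, i.isLt, dif_pos, Fin.eta]
  have ht_range : T.card = ∑ k ∈ Finset.range l, A k := by
    rw [ht_eq, ← Fin.sum_univ_eq_sum_range]
    exact Finset.sum_congr rfl fun i _ => (hAval i).symm
  have hgB : ∀ k, k < l → g k ≤ B k := by
    intro k hk
    have h1 := hgreedy ⟨k, hk⟩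
    have h2 : ∑ j ∈ Finset.Iio (⟨k, hk⟩ : Fin l), ((T ∩ S j).card : ℤ)
        = ∑ j ∈ Finset.range k, (A j : ℤ) := by
      have hmap := Fin.map_valEmbedding_Iio (a := (⟨k, hk⟩ : Fin l))
      simp only [Fin.val_mk] at hmap
      rw [← Nat.Iio_eq_range, ← hmap, Finset.sum_map]
      exact Finset.sum_congr rfl fun j _ => by
        simp only [Fin.valEmbedding_apply, hAval j]
    have h3 : (T.card : ℤ) = ∑ j ∈ Finset.range k, (A j : ℤ) + (g k : ℤ) := by
      have h : ∑ j ∈ Finset.range k, A j + ∑ j ∈ Finset.Ico k l, A j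
          = ∑ j ∈ Finset.range l, A j := by
        have h' : ∑ j ∈ Finset.Ico 0 k, A j + ∑ j ∈ Finset.Ico k l, A j
            = ∑ j ∈ Finset.Ico 0 l, A j :=
          Finset.sum_Ico_consecutive _ (Nat.zero_le k) (le_of_lt hk)
        simpa only [← Finset.range_eq_Ico] using h'
      rw [ht_range, hg]
      exact_mod_cast h.symm
    have h4 : (g k : ℤ) ≤ ((S ⟨k, hk⟩ : Finset V).card : ℤ) := by
      rw [h2] at h1; linarith
    have h5 : (g k : ℤ) ≤ (B k : ℤ) := by rw [hBval ⟨k, hk⟩]; exact h4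
    exact_mod_cast h5
  have hAg : ∀ k, k < l → A k ≤ g k := by
    intro k hk
    exact Finset.single_le_sum (f := A) (fun _ _ => Nat.zero_le _)
      (Finset.mem_Ico.mpr ⟨le_refl k, hk⟩)
  have hsum : ∑ v ∈ T, y v = ∑ k ∈ Finset.range l,
      (A k : ℝ) * (-(1 / n : ℝ) * Real.logb 2 ((B k : ℝ) * Real.exp 1 / n)) := by
    conv_lhs => rw [hT]
    rw [Finset.sum_biUnion (fun i _ j _ hij => by
      simpa [Function.onFun] using hTdisj i (Finset.mem_univ i) j (Finset.mem_univ j) hij)]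
    rw [← Fin.sum_univ_eq_sum_range]
    refine Finset.sum_congr rfl fun i _ => ?_
    rw [hAval i, hBval i]
    rw [Finset.sum_congr rfl (fun v hv =>
      hy i v (Finset.mem_inter.mp hv).2), Finset.sum_const, nsmul_eq_mul]
  rw [hsum]
  have hterm : ∀ k ∈ Finset.range l,
      (A k : ℝ) * (-(1 / n : ℝ) * Real.logb 2 ((B k : ℝ) * Real.exp 1 / n))
        ≤ (A k : ℝ) * (-(1 / ((n : ℝ) * Real.log 2)) *
            (Real.log (g k : ℝ) + 1 - Real.log n)) := by
    intro k hk
    have hkl : k < l := Finset.mem_range.mp hk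
    rcases Nat.eq_zero_or_pos (A k) with h0 | h0
    · simp [h0]
    · have hg1 : (1 : ℝ) ≤ (g k : ℝ) := by
        exact_mod_cast le_trans h0 (hAg k hkl)
      have hB1 : (g k : ℝ) ≤ (B k : ℝ) := by exact_mod_cast hgB k hkl
      have hgpos : (0 : ℝ) < (g k : ℝ) := lt_of_lt_of_le one_pos hg1
      have hBpos : (0 : ℝ) < (B k : ℝ) := lt_of_lt_of_le hgpos hB1
      have hlow : Real.log ((g k : ℝ) * Real.exp 1 / n)
          ≤ Real.log ((B k : ℝ) * Real.exp 1 / n) :=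
        Real.log_le_log (by positivity) (by gcongr)
      have heq : Real.log ((g k : ℝ) * Real.exp 1 / n)
          = Real.log (g k : ℝ) + 1 - Real.log n := by
        rw [Real.log_div (by positivity) hn'.ne',
          Real.log_mul hgpos.ne' (Real.exp_pos 1).ne', Real.log_exp]
      rw [Real.logb, ← heq]
      have hApos : (0 : ℝ) ≤ (A k : ℝ) := by positivity
      refine mul_le_mul_of_nonneg_left ?_ hApos
      have hfrac : -(1 / (n : ℝ)) * (Real.log ((B k : ℝ) * Real.exp 1 / n) / Real.log 2)
          = -(1 / ((n : ℝ) * Real.log 2)) * Real.log ((B k : ℝ) * Real.exp 1 / n) := by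
        field_simp
      rw [hfrac]
      have hc : (0 : ℝ) < 1 / ((n : ℝ) * Real.log 2) := by positivity
      nlinarith
  refine le_trans (Finset.sum_le_sum hterm) ?_
  -- telescoping bound
  have htel : (T.card : ℝ) * Real.log (T.card : ℝ)
      ≤ ∑ k ∈ Finset.range l, (A k : ℝ) * (Real.log (g k : ℝ) + 1) := by
    have h := aux_telescope A l l 0 (by omega)
    rw [← Finset.range_eq_Ico, ← ht_range] at h
    simpa only [hg] using h
  have hsumA : ∑ k ∈ Finset.range l, (A k : ℝ) = (T.card : ℝ) := by
    rw [ht_range]; push_cast; ring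
  set c : ℝ := 1 / ((n : ℝ) * Real.log 2) with hc
  have hcpos : (0 : ℝ) < c := by rw [hc]; positivity
  have hexpand : ∑ k ∈ Finset.range l, (A k : ℝ) * (-c * (Real.log (g k : ℝ) + 1 - Real.log n))
      = -c * (∑ k ∈ Finset.range l, (A k : ℝ) * (Real.log (g k : ℝ) + 1))
        + (c * Real.log n) * ∑ k ∈ Finset.range l, (A k : ℝ) := by
    rw [Finset.mul_sum, Finset.mul_sum, ← Finset.sum_add_distrib]
    exact Finset.sum_congr rfl fun k _ => by ring
  rw [hexpand, hsumA]
  have hfinal : -c * ((T.card : ℝ) * Real.log (T.card : ℝ)) + c * Real.log n * (T.card : ℝ)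
      = -((T.card : ℝ) / n) * ((Real.log (T.card : ℝ) - Real.log n) / Real.log 2) := by
    rw [hc]; ring
  have htpos : (0 : ℝ) < (T.card : ℝ) := by exact_mod_cast ht1
  have hlogdiv : Real.logb 2 ((T.card : ℝ) / n)
      = (Real.log (T.card : ℝ) - Real.log n) / Real.log 2 := by
    rw [Real.logb, Real.log_div htpos.ne' hn'.ne']
  rw [hlogdiv, ← hfinal]
  have hmul : -c * (∑ k ∈ Finset.range l, (A k : ℝ) * (Real.log (g k : ℝ) + 1))
      ≤ -c * ((T.card : ℝ) * Real.log (T.card : ℝ)) := by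
    nlinarith
  linarith
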